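/- Assume θ₁, θ₂, θ₃ are all nonzero, m ∈ ℚ is positive, θ₁·θ₂ = 2m·θ₃², and the setup of the context. Then ⟨Ψ(x), Ψ(y)⟩_{θ,h} = (N − b²)·⟨x,y⟩_{θ,h} for all x,y ∈ V_ℂ ⊕ V_ℂ^∨. -/

import Mathlib

/-!
Concrete model of the linear algebra of O'Grady's "Compact tori associated to hyperkähler
manifolds of Kummer type".

`V` is a free ℤ-module of rank 4; we model `V_ℂ = V ⊗ ℂ` as `Fin 4 → ℂ` (standard integral
structure), and its dual `V_ℂ^∨` also as `Fin 4 → ℂ` via the dot-product pairing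
`⟨ℓ, v⟩ = ℓ ⬝ᵥ v` (dual basis coordinates).  The volume form `vol : ⋀⁴V → ℤ` is the one
with `vol(e₀∧e₁∧e₂∧e₃) = 1`.  We model `⋀²V_ℂ` (and `⋀²V_ℂ^∨`) as `Fin 6 → ℂ` using the
basis `e₀∧e₁, e₀∧e₂, e₀∧e₃, e₁∧e₂, e₁∧e₃, e₂∧e₃` (resp. the dual one).
-/

noncomputable section

open Matrix Complex

/-- Model of `V_ℂ` (and of its dual `V_ℂ^∨`). -/
abbrev Vc : Type := Fin 4 → ℂ

/-- Model of `⋀²V_ℂ` (and of `⋀²V_ℂ^∨`), coordinates w.r.t. the basis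
`e₀∧e₁, e₀∧e₂, e₀∧e₃, e₁∧e₂, e₁∧e₃, e₂∧e₃`. -/
abbrev W2 : Type := Fin 6 → ℂ

/-- The wedge product `v ∧ w ∈ ⋀²V_ℂ` of two vectors. -/
def w2 (v w : Vc) : W2 :=
  ![v 0 * w 1 - v 1 * w 0, v 0 * w 2 - v 2 * w 0, v 0 * w 3 - v 3 * w 0,
    v 1 * w 2 - v 2 * w 1, v 1 * w 3 - v 3 * w 1, v 2 * w 3 - v 3 * w 2]

/-- `vol(a ∧ b)` for `a, b ∈ ⋀²V_ℂ`: the nondegenerate symmetric pairing `( , )` on `⋀²V_ℂ`.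
(The same formula computes the dual volume form `vol^∨` on `⋀²V_ℂ^∨` in dual coordinates.) -/
def volp (a b : W2) : ℂ :=
  a 0 * b 5 - a 1 * b 4 + a 2 * b 3 + a 3 * b 2 - a 4 * b 1 + a 5 * b 0

/-- The isomorphism `ι : ⋀²(V_ℂ^∨) → ⋀²V_ℂ` defined by the pairing `( , )`:
it satisfies `vol (ι Ω ∧ v ∧ w) = Ω(v,w)` for all `v, w`. -/
def iotaMap (Ω : W2) : W2 := ![Ω 5, -Ω 4, Ω 3, Ω 2, -Ω 1, Ω 0]

/-- The map `Φ_θ` on decomposable elements: for `x = (v,g)` and `y = (w,h)` in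
`V_ℂ ⊕ V_ℂ^∨`, `Φ_θ(x ∧ y) = (θ₁·v∧w + θ₂·ι(g∧h), θ₃·(g(w) − h(v)))`. -/
def Phi (t1 t2 t3 : ℤ) (x y : Vc × Vc) : W2 × ℂ :=
  ((t1 : ℂ) • w2 x.1 y.1 + (t2 : ℂ) • iotaMap (w2 x.2 y.2),
    (t3 : ℂ) * (x.2 ⬝ᵥ y.1 - y.2 ⬝ᵥ x.1))

/-- A map `f : V_ℂ → V_ℂ^∨` is antisymmetric if `⟨f v, w⟩ = −⟨f w, v⟩` for all `v, w`. -/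
def IsAnti (f : Vc → Vc) : Prop := ∀ v w : Vc, f v ⬝ᵥ w = -(f w ⬝ᵥ v)

/-- The `i`-th standard basis vector. -/
def ef (i : Fin 4) : Vc := fun j => if j = i then 1 else 0

/-- `ω_f ∈ ⋀²(V_ℂ^∨)` attached to a map `f : V_ℂ → V_ℂ^∨`:
`ω_f(v,w) = (1/2)(⟨f w, v⟩ − ⟨f v, w⟩)`, written in coordinates `ω_f(eᵢ,eⱼ)`, `i<j`. -/
def omegaF (f : Vc → Vc) : W2 :=
  ![(f (ef 1) ⬝ᵥ ef 0 - f (ef 0) ⬝ᵥ ef 1) / 2,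
    (f (ef 2) ⬝ᵥ ef 0 - f (ef 0) ⬝ᵥ ef 2) / 2,
    (f (ef 3) ⬝ᵥ ef 0 - f (ef 0) ⬝ᵥ ef 3) / 2,
    (f (ef 2) ⬝ᵥ ef 1 - f (ef 1) ⬝ᵥ ef 2) / 2,
    (f (ef 3) ⬝ᵥ ef 1 - f (ef 1) ⬝ᵥ ef 3) / 2,
    (f (ef 3) ⬝ᵥ ef 2 - f (ef 2) ⬝ᵥ ef 3) / 2]

/-- The Pfaffian of an antisymmetric map `f : V_ℂ → V_ℂ^∨`, defined by
`vol^∨(ω_f ∧ ω_f) = 2·Pf(f)`. -/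
def pfaff (f : Vc → Vc) : ℂ := volp (omegaF f) (omegaF f) / 2

/-- Evaluation against a fixed vector, as a linear functional on the dual. -/
def dotL (u : Vc) : Vc →ₗ[ℂ] ℂ where
  toFun ℓ := ℓ ⬝ᵥ u
  map_add' x y := add_dotProduct x y u
  map_smul' c x := by simp

/-- The annihilator `Ann(U) ⊂ V_ℂ^∨` of a subspace `U ⊂ V_ℂ`. -/
def AnnS (U : Submodule ℂ Vc) : Submodule ℂ Vc :=
  ⨅ u ∈ (U : Set Vc), LinearMap.ker (dotL u)

/-- Complex conjugation on `V_ℂ`, induced by the integral structure. -/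
def cV (v : Vc) : Vc := fun i => (starRingEnd ℂ) (v i)

/-- Complex conjugation on `V_ℂ ⊕ V_ℂ^∨`, induced by the integral structure `V ⊕ V^∨`. -/
def cP (x : Vc × Vc) : Vc × Vc := (cV x.1, cV x.2)

/-- Complex conjugation on `⋀²V_ℂ ⊕ ℂ`, induced by the real structure `⋀²V_ℝ ⊕ ℝ`. -/
def cW (x : W2 × ℂ) : W2 × ℂ := (fun k => (starRingEnd ℂ) (x.1 k), (starRingEnd ℂ) x.2)

/-- The symmetric bilinear form `(α + x·ζ, β + y·ζ) = vol(α∧β) − m·x·y` on `⋀²V_ℂ ⊕ ℂ`. -/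
def Bf (m : ℚ) (x y : W2 × ℂ) : ℂ := volp x.1 y.1 - (m : ℂ) * x.2 * y.2

/-- Membership in (the affine cone over) the period domain
`D = {[σ] : (σ,σ) = 0, (σ,σ̄) > 0}`. -/
def memD (m : ℚ) (σ : W2 × ℂ) : Prop :=
  σ ≠ 0 ∧ Bf m σ σ = 0 ∧ (Bf m σ (cW σ)).im = 0 ∧ 0 < (Bf m σ (cW σ)).re

/-- The class `h₀ = c(e·v₁^∨∧v₂^∨ + v₃^∨∧v₄^∨) ∈ ⋀²V^∨`, in dual coordinates. -/
def h0v (c e : ℤ) : W2 := ![(c : ℂ) * (e : ℂ), 0, 0, 0, 0, (c : ℂ)]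

/-- Evaluation of `h = h₀ + s·ζ^∨ ∈ (⋀²V ⊕ ℤ)^∨` on `⋀²V_ℂ ⊕ ℂ`. -/
def hev (c e s : ℤ) (x : W2 × ℂ) : ℂ :=
  (c : ℂ) * (e : ℂ) * x.1 0 + (c : ℂ) * x.1 5 + (s : ℂ) * x.2

/-- `N = θ₁/(c²·e·θ₂)`. -/
def Nq (t1 t2 c e : ℤ) : ℚ := (t1 : ℚ) / ((c : ℚ) ^ 2 * (e : ℚ) * (t2 : ℚ))

/-- `b = s·θ₃/(c²·e·θ₂)`. -/
def bq (t2 t3 c e s : ℤ) : ℚ := (s : ℚ) * (t3 : ℚ) / ((c : ℚ) ^ 2 * (e : ℚ) * (t2 : ℚ))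

/-- The endomorphism `Ψ(v,ℓ) = (g⁻¹(ℓ) − b·v, b·ℓ − N·g(v))` of `V_ℂ ⊕ V_ℂ^∨`. -/
def PsiL (g : Vc ≃ₗ[ℂ] Vc) (N b : ℚ) : (Vc × Vc) →ₗ[ℂ] Vc × Vc :=
  LinearMap.prod
    (g.symm.toLinearMap ∘ₗ LinearMap.snd ℂ Vc Vc - (b : ℂ) • LinearMap.fst ℂ Vc Vc)
    ((b : ℂ) • LinearMap.snd ℂ Vc Vc - (N : ℂ) • (g.toLinearMap ∘ₗ LinearMap.fst ℂ Vc Vc))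

/-- The rational subspace `V_ℚ ⊕ V_ℚ^∨ ⊂ V_ℂ ⊕ V_ℂ^∨`. -/
def ratSet : Set (Vc × Vc) :=
  {p | (∀ i, ∃ q : ℚ, p.1 i = (q : ℂ)) ∧ (∀ i, ∃ q : ℚ, p.2 i = (q : ℂ))}

/-- The complex number `i·√(N − b²)`. -/
def sqNb (N b : ℚ) : ℂ := Complex.I * ((Real.sqrt ((N - b ^ 2 : ℚ) : ℝ) : ℝ) : ℂ)

/-- The alternating form `⟨x,y⟩_{θ,h} = ⟨h, Φ_θ(x∧y)⟩` on `V_ℂ ⊕ V_ℂ^∨`. -/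
def Eth (t1 t2 t3 c e s : ℤ) (x y : Vc × Vc) : ℂ := hev c e s (Phi t1 t2 t3 x y)


lemma dot_ef (ℓ : Vc) (j : Fin 4) : ℓ ⬝ᵥ ef j = ℓ j := by
  simp [dotProduct, ef]

lemma vc_decomp (v : Vc) :
    v = v 0 • ef 0 + v 1 • ef 1 + v 2 • ef 2 + v 3 • ef 3 := by
  funext j
  fin_cases j <;> simp [ef]

lemma g_explicit (c e : ℤ) (g : Vc ≃ₗ[ℂ] Vc) (hg : IsAnti ⇑g) (hgw : omegaF ⇑g = h0v c e) :
    ∀ v : Vc, g v = ![(c : ℂ) * e * v 1, -((c : ℂ) * e) * v 0, (c : ℂ) * v 3, -(c : ℂ) * v 2] := by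
  have hd : ∀ i, g (ef i) ⬝ᵥ ef i = 0 := fun i => by linear_combination (hg (ef i) (ef i)) / 2
  have h0 : (g (ef 1) ⬝ᵥ ef 0 - g (ef 0) ⬝ᵥ ef 1) / 2 = (c : ℂ) * e := congrFun hgw 0
  have h1 : (g (ef 2) ⬝ᵥ ef 0 - g (ef 0) ⬝ᵥ ef 2) / 2 = 0 := congrFun hgw 1
  have h2 : (g (ef 3) ⬝ᵥ ef 0 - g (ef 0) ⬝ᵥ ef 3) / 2 = 0 := congrFun hgw 2
  have h3 : (g (ef 2) ⬝ᵥ ef 1 - g (ef 1) ⬝ᵥ ef 2) / 2 = 0 := congrFun hgw 3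
  have h4 : (g (ef 3) ⬝ᵥ ef 1 - g (ef 1) ⬝ᵥ ef 3) / 2 = 0 := congrFun hgw 4
  have h5 : (g (ef 3) ⬝ᵥ ef 2 - g (ef 2) ⬝ᵥ ef 3) / 2 = (c : ℂ) := congrFun hgw 5
  have e01 : g (ef 0) ⬝ᵥ ef 1 = -((c : ℂ) * e) := by
    linear_combination -h0 + (hg (ef 1) (ef 0)) / 2
  have e02 : g (ef 0) ⬝ᵥ ef 2 = 0 := by linear_combination -h1 + (hg (ef 2) (ef 0)) / 2
  have e03 : g (ef 0) ⬝ᵥ ef 3 = 0 := by linear_combination -h2 + (hg (ef 3) (ef 0)) / 2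
  have e12 : g (ef 1) ⬝ᵥ ef 2 = 0 := by linear_combination -h3 + (hg (ef 2) (ef 1)) / 2
  have e13 : g (ef 1) ⬝ᵥ ef 3 = 0 := by linear_combination -h4 + (hg (ef 3) (ef 1)) / 2
  have e23 : g (ef 2) ⬝ᵥ ef 3 = -(c : ℂ) := by linear_combination -h5 + (hg (ef 3) (ef 2)) / 2
  have e10 : g (ef 1) ⬝ᵥ ef 0 = (c : ℂ) * e := by rw [hg (ef 1) (ef 0), e01]; ring
  have e20 : g (ef 2) ⬝ᵥ ef 0 = 0 := by rw [hg (ef 2) (ef 0), e02]; ring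
  have e30 : g (ef 3) ⬝ᵥ ef 0 = 0 := by rw [hg (ef 3) (ef 0), e03]; ring
  have e21 : g (ef 2) ⬝ᵥ ef 1 = 0 := by rw [hg (ef 2) (ef 1), e12]; ring
  have e31 : g (ef 3) ⬝ᵥ ef 1 = 0 := by rw [hg (ef 3) (ef 1), e13]; ring
  have e32 : g (ef 3) ⬝ᵥ ef 2 = (c : ℂ) := by rw [hg (ef 3) (ef 2), e23]; ring
  intro v
  have hv : g v = v 0 • g (ef 0) + v 1 • g (ef 1) + v 2 • g (ef 2) + v 3 • g (ef 3) := by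
    conv_lhs => rw [vc_decomp v]
    simp only [map_add, LinearEquiv.map_smul]
  have key : ∀ i j : Fin 4, g (ef i) j = g (ef i) ⬝ᵥ ef j := fun i j => (dot_ef _ _).symm
  have c0 : g v 0 = (c : ℂ) * e * v 1 := by
    rw [hv]
    simp only [Pi.add_apply, Pi.smul_apply, smul_eq_mul, key, hd, e10, e20, e30]; ring
  have c1 : g v 1 = -((c : ℂ) * e) * v 0 := by
    rw [hv]
    simp only [Pi.add_apply, Pi.smul_apply, smul_eq_mul, key, hd, e01, e21, e31]; ring
  have c2 : g v 2 = (c : ℂ) * v 3 := by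
    rw [hv]
    simp only [Pi.add_apply, Pi.smul_apply, smul_eq_mul, key, hd, e02, e12, e32]; ring
  have c3 : g v 3 = -(c : ℂ) * v 2 := by
    rw [hv]
    simp only [Pi.add_apply, Pi.smul_apply, smul_eq_mul, key, hd, e03, e13, e23]; ring
  funext j
  fin_cases j
  exacts [c0, c1, c2, c3]

lemma gsymm_explicit (c e : ℤ) (hc : (c : ℂ) ≠ 0) (he : (e : ℂ) ≠ 0)
    (g : Vc ≃ₗ[ℂ] Vc)
    (hge : ∀ v : Vc, g v = ![(c : ℂ) * e * v 1, -((c : ℂ) * e) * v 0, (c : ℂ) * v 3, -(c : ℂ) * v 2]) :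
    ∀ ℓ : Vc, g.symm ℓ =
      ![-(ℓ 1) / ((c : ℂ) * e), ℓ 0 / ((c : ℂ) * e), -(ℓ 3) / (c : ℂ), ℓ 2 / (c : ℂ)] := by
  intro ℓ
  rw [LinearEquiv.symm_apply_eq, hge]
  funext j
  fin_cases j <;> simp <;> field_simp

lemma cons6_two (a b c d e f : ℂ) : ![a,b,c,d,e,f] 2 = c := rfl
lemma cons6_three (a b c d e f : ℂ) : ![a,b,c,d,e,f] 3 = d := rfl
lemma cons6_four (a b c d e f : ℂ) : ![a,b,c,d,e,f] 4 = e := rfl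
lemma cons6_five (a b c d e f : ℂ) : ![a,b,c,d,e,f] 5 = f := rfl
lemma cons4_two (a b c d : ℂ) : ![a,b,c,d] 2 = c := rfl
lemma cons4_three (a b c d : ℂ) : ![a,b,c,d] 3 = d := rfl

set_option maxHeartbeats 3200000 in
/-- **(From the proof of Theorem 5.2 in O'Grady.)** With the setup as in the context
(`θᵢ ≠ 0`, `m > 0`, `θ₁θ₂ = 2mθ₃²`, `c, e > 0`, `g` antisymmetric with `ω_g = h₀`),
`Ψ` multiplies the alternating form `⟨x,y⟩_{θ,h} = ⟨h, Φ_θ(x∧y)⟩` by `N − b²`: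
`⟨Ψx, Ψy⟩_{θ,h} = (N − b²)·⟨x,y⟩_{θ,h}` for all `x, y ∈ V_ℂ ⊕ V_ℂ^∨`. -/
theorem statement16 (t1 t2 t3 : ℤ) (h1 : t1 ≠ 0) (h2 : t2 ≠ 0) (h3 : t3 ≠ 0)
    (m : ℚ) (hm : 0 < m) (hrel : (t1 : ℚ) * t2 = 2 * m * t3 ^ 2)
    (c e s : ℤ) (hc : 0 < c) (he : 0 < e)
    (g : Vc ≃ₗ[ℂ] Vc) (hg : IsAnti ⇑g) (hgw : omegaF ⇑g = h0v c e) :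
    ∀ x y : Vc × Vc,
      Eth t1 t2 t3 c e s (PsiL g (Nq t1 t2 c e) (bq t2 t3 c e s) x)
          (PsiL g (Nq t1 t2 c e) (bq t2 t3 c e s) y) =
        ((Nq t1 t2 c e - bq t2 t3 c e s ^ 2 : ℚ) : ℂ) * Eth t1 t2 t3 c e s x y := by
  intro x y
  have hcC : (c : ℂ) ≠ 0 := Int.cast_ne_zero.mpr hc.ne'
  have heC : (e : ℂ) ≠ 0 := Int.cast_ne_zero.mpr he.ne'
  have ht2 : (t2 : ℂ) ≠ 0 := Int.cast_ne_zero.mpr h2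
  have hge := g_explicit c e g hg hgw
  obtain ⟨a, α⟩ := x
  obtain ⟨q, rfl⟩ : ∃ q, α = g q := ⟨g.symm α, (g.apply_symm_apply α).symm⟩
  obtain ⟨d, β⟩ := y
  obtain ⟨r, rfl⟩ : ∃ r, β = g r := ⟨g.symm β, (g.apply_symm_apply β).symm⟩
  have hN : ((Nq t1 t2 c e : ℚ) : ℂ) * ((c : ℂ) ^ 2 * (e : ℂ) * (t2 : ℂ)) = (t1 : ℂ) := by
    rw [Nq]; push_cast; field_simp
  have hb : ((bq t2 t3 c e s : ℚ) : ℂ) * ((c : ℂ) ^ 2 * (e : ℂ) * (t2 : ℂ))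
      = (s : ℂ) * (t3 : ℂ) := by
    rw [bq]; push_cast; field_simp
  simp only [Eth, Phi, hev, PsiL, LinearMap.prod_apply, Pi.prod, Function.prod, LinearMap.coe_comp,
    Function.comp_apply, LinearMap.sub_apply, LinearMap.smul_apply, LinearMap.fst_apply,
    LinearMap.snd_apply, LinearEquiv.coe_coe, LinearEquiv.symm_apply_apply]
  push_cast
  set NN := ((Nq t1 t2 c e : ℚ) : ℂ) with hNN
  set bb := ((bq t2 t3 c e s : ℚ) : ℂ) with hbb
  have hst : ∀ z : ℂ, (s : ℂ) * ((t3 : ℂ) * z) = bb * ((c : ℂ) ^ 2 * (e : ℂ) * (t2 : ℂ)) * z :=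
    fun z => by linear_combination z * hb.symm
  simp only [hst]
  rw [← hN]
  simp only [hge]
  simp only [w2, iotaMap, dotProduct, Fin.sum_univ_four, Pi.sub_apply, Pi.smul_apply,
    Pi.add_apply, smul_eq_mul, Matrix.cons_val_zero, Matrix.cons_val_one, Matrix.head_cons,
    cons6_two, cons6_three, cons6_four, cons6_five, cons4_two, cons4_three]
  ring
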